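/- Let n be a natural number, t, θ, g ∈ ℂ, let q, p : Fin n → ℂ with q injective, let Q = diag(q_1,…,q_n), and let P be the n×n complex matrix with P i i = p i and P i j = i·g/(q i − q j) for i ≠ j (i the imaginary unit). Then trace(P²/2 − (Q² + (t/2)·1)²/2 − θ·Q) = Σ_i [p_i²/2 − (q_i² + t/2)²/2 − θ q_i] + g² Σ_{i<j} 1/(q_i − q_j)². -/
import Mathlib

open Finset in
lemma pair_sum_aux {n : ℕ} (f : Fin n → Fin n → ℂ) (hsymm : ∀ i j, f i j = f j i) :
    (∑ i, ∑ j, if i = j then 0 else f i j) = 2 * ∑ i, ∑ j, if i < j then f i j else 0 := by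
  have h1 : (∑ i, ∑ j, if i = j then (0:ℂ) else f i j)
      = (∑ i, ∑ j, if i < j then f i j else 0) + (∑ i, ∑ j, if j < i then f i j else 0) := by
    rw [← Finset.sum_add_distrib]
    refine Finset.sum_congr rfl fun i _ => ?_
    rw [← Finset.sum_add_distrib]
    refine Finset.sum_congr rfl fun j _ => ?_
    rcases lt_trichotomy i j with h | h | h
    · simp [h, h.ne, h.asymm]
    · simp [h]
    · simp [h, h.ne', h.asymm]
  have h2 : (∑ i, ∑ j, if j < i then f i j else (0:ℂ))
      = ∑ i, ∑ j, if i < j then f i j else 0 := by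
    rw [Finset.sum_comm]
    exact Finset.sum_congr rfl fun i _ => Finset.sum_congr rfl fun j _ => by
      rw [hsymm]
  rw [h1, h2, two_mul]



/-- Computation of the multi-particle Calogero–Painlevé II Hamiltonian: for `Q = diag(q)`
and `P` with diagonal entries `p i` and off-diagonal entries `I·g/(q i − q j)`,
`Tr(P²/2 − (Q² + (t/2)·1)²/2 − θQ)` equals the multi-particle Hamiltonian with
pairwise inverse-square interaction. -/
theorem calogero_painleveII_hamiltonian (n : ℕ) (t θ g : ℂ)
    (q p : Fin n → ℂ) (hq : Function.Injective q) :
    Matrix.trace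
        ((1 / 2 : ℂ) • (Matrix.of fun i j : Fin n =>
            if i = j then p i else Complex.I * g / (q i - q j)) ^ 2
          - (1 / 2 : ℂ) • ((Matrix.diagonal q) ^ 2
              + (t / 2) • (1 : Matrix (Fin n) (Fin n) ℂ)) ^ 2
          - θ • Matrix.diagonal q)
      = (∑ i, ((p i) ^ 2 / 2 - ((q i) ^ 2 + t / 2) ^ 2 / 2 - θ * q i))
        + g ^ 2 * ∑ i, ∑ j, if i < j then 1 / (q i - q j) ^ 2 else 0 := by
  classical
  have hD : ((Matrix.diagonal q) ^ 2 + (t / 2) • (1 : Matrix (Fin n) (Fin n) ℂ)) ^ 2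
      = Matrix.diagonal (fun i => (q i ^ 2 + t / 2) ^ 2) := by
    rw [Matrix.smul_one_eq_diagonal, Matrix.diagonal_pow, Matrix.diagonal_add,
      Matrix.diagonal_pow]
    rfl
  set P : Matrix (Fin n) (Fin n) ℂ := Matrix.of fun i j : Fin n =>
      if i = j then p i else Complex.I * g / (q i - q j) with hPdef
  have hP2 : Matrix.trace (P ^ 2)
      = (∑ i, p i ^ 2) + ∑ i, ∑ j, if i = j then 0 else g ^ 2 / (q i - q j) ^ 2 := by
    rw [pow_two, Matrix.trace_mul_comm, Matrix.trace, ← Finset.sum_add_distrib]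
    refine Finset.sum_congr rfl fun i _ => ?_
    rw [Matrix.diag, Matrix.mul_apply]
    rw [show (p i ^ 2 + ∑ j, if i = j then (0:ℂ) else g ^ 2 / (q i - q j) ^ 2)
        = ∑ j, ((if i = j then p i ^ 2 else 0) + if i = j then 0 else g ^ 2 / (q i - q j) ^ 2)
        from by rw [Finset.sum_add_distrib, Finset.sum_ite_eq]; simp]
    refine Finset.sum_congr rfl fun j _ => ?_
    by_cases h : i = j
    · subst h; simp [hPdef, pow_two]
    · have hne : q i - q j ≠ 0 := sub_ne_zero.mpr (fun hh => h (hq hh))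
      have hne' : q j - q i ≠ 0 := sub_ne_zero.mpr (fun hh => h (hq hh).symm)
      simp only [hPdef, Matrix.of_apply, h, Ne.symm h, if_false, if_neg (Ne.symm h)]
      field_simp
      ring_nf
      rw [Complex.I_sq]
      ring
  rw [Matrix.trace_sub, Matrix.trace_sub, Matrix.trace_smul, Matrix.trace_smul,
    Matrix.trace_smul, hD, hP2, Matrix.trace_diagonal, Matrix.trace_diagonal,
    pair_sum_aux (fun i j => g ^ 2 / (q i - q j) ^ 2)
      (fun i j => by
        show g ^ 2 / (q i - q j) ^ 2 = g ^ 2 / (q j - q i) ^ 2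
        rw [show (q j - q i) ^ 2 = (q i - q j) ^ 2 from by ring])]
  have hS : (∑ i, ∑ j, if i < j then g ^ 2 / (q i - q j) ^ 2 else (0:ℂ))
      = g ^ 2 * ∑ i, ∑ j, if i < j then 1 / (q i - q j) ^ 2 else 0 := by
    rw [Finset.mul_sum]
    refine Finset.sum_congr rfl fun i _ => ?_
    rw [Finset.mul_sum]
    refine Finset.sum_congr rfl fun j _ => ?_
    split <;> simp [div_eq_mul_inv]
  rw [hS]
  simp only [smul_eq_mul, Finset.sum_sub_distrib, ← Finset.sum_div, ← Finset.mul_sum]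
  ring
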